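/- Closure of the marginals Gram matrix family under multiplication: with C(a) as above and G(v) = Σ_{a∈{0,1}^d} v_a C(a) for v ∈ R^{2^d}, for every u, v there exists w ∈ R^{2^d} with G(u)G(v) = G(w), given by w_k = Σ_{a,b : a∧b = k} u_a v_b c(a∨b). Moreover w depends linearly on v, i.e., w = X(u) v where X(u)[k,b] = Σ_{a : a∧b = k} u_a c(a∨b). -/

import Mathlib

open Matrix

variable {d : ℕ}

/-- `C(a) = ⊗ᵢ Mᵢ(aᵢ)` where `Mᵢ(0) = J` (all-ones) and `Mᵢ(1) = I`. -/
def margGram (n : Fin d → ℕ) (a : Fin d → Bool) :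
    Matrix (∀ i, Fin (n i)) (∀ i, Fin (n i)) ℝ :=
  Matrix.of fun r c => ∏ i, if a i then (if r i = c i then (1 : ℝ) else 0) else 1

/-- `c(k) = ∏ᵢ (nᵢ if kᵢ = 0 else 1)`. -/
def margConst (n : Fin d → ℕ) (k : Fin d → Bool) : ℝ :=
  ∏ i, if k i then 1 else (n i : ℝ)

lemma margGram_mul (n : Fin d → ℕ) (a b : Fin d → Bool) :
    margGram n a * margGram n b
      = margConst n (fun i => a i || b i) • margGram n (fun i => a i && b i) := by
  ext r c
  simp only [mul_apply, margGram, margConst, Matrix.of_apply, smul_eq_mul, Matrix.smul_apply]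
  have : ∀ s : ∀ i, Fin (n i),
      (∏ i, if a i then (if r i = s i then (1:ℝ) else 0) else 1)
        * (∏ i, if b i then (if s i = c i then (1:ℝ) else 0) else 1)
      = ∏ i, ((if a i then (if r i = s i then (1:ℝ) else 0) else 1)
        * (if b i then (if s i = c i then (1:ℝ) else 0) else 1)) := by
    intro s; rw [Finset.prod_mul_distrib]
  simp only [this]
  rw [← Fintype.piFinset_univ,
    ← Finset.prod_univ_sum (t := fun _ => Finset.univ)
      (f := fun i x => (if a i then (if r i = x then (1:ℝ) else 0) else 1)
        * (if b i then (if x = c i then (1:ℝ) else 0) else 1)),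
    ← Finset.prod_mul_distrib]
  refine Finset.prod_congr rfl fun i _ => ?_
  by_cases ha : a i = true <;> by_cases hb : b i = true <;>
    simp only [ha, hb, Bool.not_eq_true] at * <;>
    simp [ha, hb, Finset.sum_ite_eq, Finset.sum_ite_eq', mul_comm]

/-- `G(v) = Σ_a v_a C(a)`. -/
def margG (n : Fin d → ℕ) (v : (Fin d → Bool) → ℝ) :
    Matrix (∀ i, Fin (n i)) (∀ i, Fin (n i)) ℝ :=
  ∑ a, v a • margGram n a

/-- The matrix `X(u)` with `X(u)[k,b] = Σ_{a : a∧b = k} u_a c(a∨b)`. -/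
def margX (n : Fin d → ℕ) (u : (Fin d → Bool) → ℝ) :
    Matrix (Fin d → Bool) (Fin d → Bool) ℝ :=
  Matrix.of fun k b =>
    ∑ a, if (fun i => a i && b i) = k then u a * margConst n (fun i => a i || b i) else 0

/-- Closure of the marginals Gram family under multiplication:
`G(u)G(v) = G(w)` with `w_k = Σ_{a∧b=k} u_a v_b c(a∨b)`, and `w = X(u) v`. -/
theorem margG_mul (n : Fin d → ℕ) (u v : (Fin d → Bool) → ℝ) :
    margG n u * margG n v
      = margG n (fun k => ∑ a, ∑ b,
          if (fun i => a i && b i) = k then u a * v b * margConst n (fun i => a i || b i) else 0)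
      ∧ margG n u * margG n v = margG n (margX n u *ᵥ v) := by
  have key : margG n u * margG n v
      = ∑ a, ∑ b, (u a * v b * margConst n (fun i => a i || b i))
          • margGram n (fun i => a i && b i) := by
    simp only [margG, Finset.sum_mul, Finset.mul_sum, smul_mul_assoc, mul_smul_comm,
      margGram_mul, smul_smul, mul_assoc, Finset.smul_sum]
    rw [Finset.sum_comm]
    refine Finset.sum_congr rfl fun a _ => Finset.sum_congr rfl fun b _ => ?_
    congr 1
    ring
  have h1 : margG n (fun k => ∑ a, ∑ b,
      if (fun i => a i && b i) = k then u a * v b * margConst n (fun i => a i || b i) else 0)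
      = ∑ a, ∑ b, (u a * v b * margConst n (fun i => a i || b i))
          • margGram n (fun i => a i && b i) := by
    simp only [margG, Finset.sum_smul, ite_smul, zero_smul]
    rw [Finset.sum_comm]
    refine Finset.sum_congr rfl fun a _ => ?_
    rw [Finset.sum_comm]
    refine Finset.sum_congr rfl fun b _ => ?_
    simp [Finset.sum_ite_eq]
  have h2 : (margX n u *ᵥ v) = fun k => ∑ a, ∑ b,
      if (fun i => a i && b i) = k then u a * v b * margConst n (fun i => a i || b i) else 0 := by
    funext k
    simp only [mulVec, dotProduct, margX, Matrix.of_apply, Finset.sum_mul, ite_mul, zero_mul]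
    rw [Finset.sum_comm]
    refine Finset.sum_congr rfl fun a _ => Finset.sum_congr rfl fun b _ => ?_
    by_cases h : (fun i => a i && b i) = k <;> simp [h] <;> ring
  refine ⟨by rw [key, h1], ?_⟩
  rw [key, h2, h1]
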